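/- Fix an integer k ≥ k* (used as the threshold index for all n with n > k) and a fixed positive integer m. Then E[ θ̃_k^{2m} ] ≤ (2 log n)^m for all sufficiently large n. -/

import Mathlib

set_option autoImplicit false

open MeasureTheory ProbabilityTheory Filter Real

section ThresholdAux
open Set

lemma exp_decay_integral {l : ℝ} (hl : 0 < l) :
    IntegrableOn (fun s : ℝ => s * Real.exp (-(l * s))) (Set.Ioi 0) volume ∧
    ∫ s in Set.Ioi (0:ℝ), s * Real.exp (-(l * s)) = 1 / l ^ 2 := by
  have hl' : l ≠ 0 := ne_of_gt hl
  set F : ℝ → ℝ := fun s => -(s / l + 1 / l ^ 2) * Real.exp (-(l * s)) with hFdef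
  have hF : ∀ x : ℝ, HasDerivAt F (x * Real.exp (-(l * x))) x := by
    intro x
    have h1 : HasDerivAt (fun s : ℝ => -(s / l + 1 / l ^ 2)) (-(1/l)) x := by
      have h0 : HasDerivAt (fun s : ℝ => s / l + 1 / l ^ 2) (1/l) x := by
        have := ((hasDerivAt_id x).div_const l).add_const (1 / l ^ 2)
        simp only [one_div] at this ⊢
        exact this
      exact h0.neg
    have h2 : HasDerivAt (fun s : ℝ => Real.exp (-(l * s))) (Real.exp (-(l * x)) * (-l)) x := by
      have h0 : HasDerivAt (fun s : ℝ => -(l * s)) (-l) x := by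
        have := ((hasDerivAt_id' x).const_mul l).neg
        rw [mul_one] at this
        exact this
      exact h0.exp
    have h3 := h1.mul h2
    refine h3.congr_deriv ?_
    field_simp
    ring
  have htend : Tendsto F atTop (nhds 0) := by
    have hA : Tendsto (fun s : ℝ => s * Real.exp (-(l * s))) atTop (nhds 0) := by
      have h := tendsto_rpow_mul_exp_neg_mul_atTop_nhds_zero 1 l hl
      refine h.congr' ?_
      filter_upwards [eventually_gt_atTop (0:ℝ)] with x hx
      rw [Real.rpow_one]
      ring_nf
    have hB : Tendsto (fun s : ℝ => Real.exp (-(l * s))) atTop (nhds 0) := by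
      have hmul : Tendsto (fun s : ℝ => l * s) atTop atTop :=
        Tendsto.const_mul_atTop hl tendsto_id
      have h2 := tendsto_exp_neg_atTop_nhds_zero.comp hmul
      simpa [Function.comp_def] using h2
    have : Tendsto (fun s : ℝ => -((1/l) * (s * Real.exp (-(l * s))) + (1/l^2) * Real.exp (-(l*s))))
        atTop (nhds (-((1/l) * 0 + (1/l^2) * 0))) := ((hA.const_mul _).add (hB.const_mul _)).neg
    simp only [mul_zero, add_zero, neg_zero] at this
    refine this.congr fun s => ?_
    simp only [hFdef]
    ring
  have hcont : ContinuousWithinAt F (Set.Ici 0) 0 := (hF 0).continuousAt.continuousWithinAt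
  have hderiv : ∀ x ∈ Set.Ioi (0:ℝ), HasDerivAt F (x * Real.exp (-(l * x))) x := fun x _ => hF x
  have hpos : ∀ x ∈ Set.Ioi (0:ℝ), 0 ≤ x * Real.exp (-(l * x)) := fun x hx =>
    mul_nonneg (le_of_lt hx) (Real.exp_pos _).le
  refine ⟨integrableOn_Ioi_deriv_of_nonneg hcont hderiv hpos htend, ?_⟩
  have := integral_Ioi_of_hasDerivAt_of_nonneg hcont hderiv hpos htend
  rw [this]
  simp only [hFdef]
  field_simp
  simp

noncomputable def wfun (T : ℝ) (s : ℝ) : ℝ := max s 0 * Real.exp (-(T/2 * max s 0))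

lemma wfun_nonneg (T s : ℝ) : 0 ≤ wfun T s :=
  mul_nonneg (le_max_right _ _) (Real.exp_pos _).le

lemma wfun_continuous (T : ℝ) : Continuous (wfun T) := by
  unfold wfun
  continuity

lemma wfun_integrable {T : ℝ} (hT : 0 < T) : Integrable (wfun T) volume := by
  have hl : 0 < T / 2 := by linarith
  have h1 : IntegrableOn (wfun T) (Set.Iic 0) volume := by
    have : EqOn (wfun T) 0 (Set.Iic 0) := by
      intro s hs
      simp only [wfun, Pi.zero_apply]
      rw [max_eq_right (by exact hs : s ≤ 0)]
      simp
    exact (integrableOn_congr_fun this measurableSet_Iic).mpr (integrableOn_zero)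
  have h2 : IntegrableOn (wfun T) (Set.Ioi 0) volume := by
    have : EqOn (wfun T) (fun s => s * Real.exp (-(T/2 * s))) (Set.Ioi 0) := by
      intro s hs
      simp only [wfun]
      rw [max_eq_left (le_of_lt hs)]
    exact (integrableOn_congr_fun this measurableSet_Ioi).mpr (exp_decay_integral hl).1
  have h3 := h1.union h2
  rw [Set.Iic_union_Ioi] at h3
  exact integrableOn_univ.mp h3

lemma wfun_integral {T : ℝ} (hT : 0 < T) : ∫ s, wfun T s = 4 / T ^ 2 := by
  have hl : 0 < T / 2 := by linarith
  have h1 : IntegrableOn (wfun T) (Set.Iic 0) volume := ((wfun_integrable hT).restrict)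
  have h2 : IntegrableOn (wfun T) (Set.Ioi 0) volume := ((wfun_integrable hT).restrict)
  rw [← intervalIntegral.integral_Iic_add_Ioi h1 h2]
  have e1 : ∫ s in Set.Iic (0:ℝ), wfun T s = 0 := by
    rw [setIntegral_congr_fun measurableSet_Iic (g := fun _ => (0:ℝ))]
    · simp
    · intro s hs
      simp only [wfun]
      rw [max_eq_right (by exact hs : s ≤ 0)]
      simp
  have e2 : ∫ s in Set.Ioi (0:ℝ), wfun T s = 1 / (T/2) ^ 2 := by
    rw [setIntegral_congr_fun measurableSet_Ioi (g := fun s => s * Real.exp (-(T/2 * s)))]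
    · exact (exp_decay_integral hl).2
    · intro s hs
      simp only [wfun]
      rw [max_eq_left (le_of_lt hs)]
  rw [e1, e2]
  field_simp
  ring

noncomputable def psif (T : ℝ) (x : ℝ) : ℝ := wfun T (x - T) + wfun T (-x - T)

lemma psif_nonneg (T x : ℝ) : 0 ≤ psif T x := add_nonneg (wfun_nonneg _ _) (wfun_nonneg _ _)

lemma neg_comp_eq (T : ℝ) : (fun x : ℝ => wfun T (-x - T)) = fun x => (fun y => wfun T (-y)) (x + T) := by
  funext x; simp only [neg_add]; ring_nf

lemma psif_integrable {T : ℝ} (hT : 0 < T) : Integrable (psif T) volume := by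
  have h1 : Integrable (fun x : ℝ => wfun T (x - T)) volume :=
    (wfun_integrable hT).comp_sub_right T
  have h2 : Integrable (fun x : ℝ => wfun T (-x - T)) volume := by
    rw [neg_comp_eq T]
    exact ((wfun_integrable hT).comp_neg).comp_add_right T
  exact h1.add h2

lemma psif_integral {T : ℝ} (hT : 0 < T) : ∫ x, psif T x = 8 / T ^ 2 := by
  have h1 : Integrable (fun x : ℝ => wfun T (x - T)) volume :=
    (wfun_integrable hT).comp_sub_right T
  have h2 : Integrable (fun x : ℝ => wfun T (-x - T)) volume := by
    rw [neg_comp_eq T]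
    exact ((wfun_integrable hT).comp_neg).comp_add_right T
  have e1 : ∫ x : ℝ, wfun T (x - T) = 4 / T ^ 2 := by
    rw [integral_sub_right_eq_self (wfun T) T]
    exact wfun_integral hT
  have e2 : ∫ x : ℝ, wfun T (-x - T) = 4 / T ^ 2 := by
    rw [neg_comp_eq T, integral_add_right_eq_self (fun y : ℝ => wfun T (-y)) T,
      integral_neg_eq_self (wfun T) volume]
    exact wfun_integral hT
  unfold psif
  rw [integral_add h1 h2, e1, e2]
  ring

lemma key_pointwise (m : ℕ) (hm : 1 ≤ m) {T : ℝ} (hT : 0 < T) (hT2 : 4*(m:ℝ) ≤ T^2) (x : ℝ) :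
    |x| ^ (2*m-1) * max (|x| - T) 0 * Real.exp (-x^2/2)
      ≤ T ^ (2*m-1) * Real.exp (-T^2/2) * psif T x := by
  set e := 2*m - 1 with he_def
  have he_cast : (e : ℝ) ≤ 2 * m := by
    have : (e : ℕ) ≤ 2*m := Nat.sub_le _ _
    exact_mod_cast le_trans (Nat.cast_le.mpr this) (by norm_num)
  set t := |x| with ht_def
  have ht0 : 0 ≤ t := abs_nonneg x
  have hx2 : x^2 = t^2 := (sq_abs x).symm
  have hwle : wfun T (t - T) ≤ psif T x := by
    rcases le_or_gt 0 x with hx | hx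
    · have : t - T = x - T := by rw [ht_def, abs_of_nonneg hx]
      rw [this]
      exact le_add_of_nonneg_right (wfun_nonneg _ _)
    · have : t - T = -x - T := by rw [ht_def, abs_of_neg hx]
      rw [this]
      exact le_add_of_nonneg_left (wfun_nonneg _ _)
  have key : t ^ e * max (t - T) 0 * Real.exp (-t^2/2)
      ≤ T ^ e * Real.exp (-T^2/2) * wfun T (t - T) := by
    rcases le_or_gt t T with h | h
    · rw [max_eq_right (by linarith : t - T ≤ 0)]
      simp only [mul_zero, zero_mul]
      exact mul_nonneg (by positivity) (wfun_nonneg _ _)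
    · set s := t - T with hs_def
      have hs : 0 < s := by simp only [hs_def]; linarith
      rw [max_eq_left hs.le]
      have hw : wfun T (t - T) = s * Real.exp (-(T/2 * s)) := by
        rw [wfun, ← hs_def, max_eq_left hs.le]
      rw [hw]
      have step1 : t ^ e ≤ T ^ e * Real.exp ((e : ℝ) * (s / T)) := by
        have h1 : t ≤ T * Real.exp (s / T) := by
          have := Real.add_one_le_exp (s / T)
          have h2 : T * (s / T + 1) ≤ T * Real.exp (s / T) :=
            mul_le_mul_of_nonneg_left this hT.le
          calc t = T * (s / T + 1) := by
                field_simp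
                simp only [hs_def]
                ring
            _ ≤ T * Real.exp (s / T) := h2
        calc t ^ e ≤ (T * Real.exp (s / T)) ^ e := pow_le_pow_left₀ ht0 h1 e
          _ = T ^ e * Real.exp (s / T) ^ e := mul_pow _ _ _
          _ = T ^ e * Real.exp ((e : ℝ) * (s / T)) := by rw [← Real.exp_nat_mul]
      have step2 : Real.exp ((e : ℝ) * (s / T)) * Real.exp (-t^2/2)
          ≤ Real.exp (-T^2/2) * Real.exp (-(T/2 * s)) := by
        rw [← Real.exp_add, ← Real.exp_add]
        apply Real.exp_le_exp.mpr
        have ht_eq : t = T + s := by simp [hs_def]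
        have hexp : (e : ℝ) * (s / T) ≤ 2 * m * (s / T) :=
          mul_le_mul_of_nonneg_right he_cast (by positivity)
        have h4 : 2 * (m:ℝ) * (s / T) ≤ T * s / 2 := by
          have hq : 2*(m:ℝ)/T ≤ T/2 := by
            rw [div_le_div_iff₀ hT (by norm_num : (0:ℝ) < 2)]
            nlinarith
          calc 2*(m:ℝ)*(s/T) = (2*m/T)*s := by ring
            _ ≤ (T/2)*s := mul_le_mul_of_nonneg_right hq hs.le
            _ = T*s/2 := by ring
        nlinarith [sq_nonneg s]
      calc t ^ e * s * Real.exp (-t^2/2)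
          ≤ (T ^ e * Real.exp ((e:ℝ) * (s / T))) * s * Real.exp (-t^2/2) := by
            apply mul_le_mul_of_nonneg_right _ (Real.exp_pos _).le
            exact mul_le_mul_of_nonneg_right step1 hs.le
        _ = T ^ e * (Real.exp ((e:ℝ) * (s / T)) * Real.exp (-t^2/2)) * s := by ring
        _ ≤ T ^ e * (Real.exp (-T^2/2) * Real.exp (-(T/2 * s))) * s := by
            apply mul_le_mul_of_nonneg_right _ hs.le
            exact mul_le_mul_of_nonneg_left step2 (by positivity)
        _ = T ^ e * Real.exp (-T^2/2) * (s * Real.exp (-(T/2 * s))) := by ring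
  calc |x| ^ e * max (|x| - T) 0 * Real.exp (-x^2/2)
      = t ^ e * max (t - T) 0 * Real.exp (-t^2/2) := by rw [← ht_def, hx2]
    _ ≤ T ^ e * Real.exp (-T^2/2) * wfun T (t - T) := key
    _ ≤ T ^ e * Real.exp (-T^2/2) * psif T x := by
        apply mul_le_mul_of_nonneg_left hwle (by positivity)

lemma psif_measurable (T : ℝ) : Measurable (psif T) := by
  unfold psif wfun
  fun_prop

lemma hfun_measurable (m : ℕ) (T : ℝ) :
    Measurable (fun x : ℝ => |x| ^ (2*m-1) * max (|x| - T) 0) := by fun_prop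

lemma pdf_eq (x : ℝ) :
    gaussianPDFReal 0 1 x = (Real.sqrt (2*π))⁻¹ * Real.exp (-x^2/2) := by
  unfold gaussianPDFReal
  norm_num

lemma gauss_tail (m : ℕ) (hm : 1 ≤ m) {T : ℝ} (hT : 0 < T) (hT2 : 4*(m:ℝ) ≤ T^2) :
    Integrable (fun x : ℝ => |x| ^ (2*m-1) * max (|x| - T) 0) (gaussianReal 0 1) ∧
    ∫ x, |x| ^ (2*m-1) * max (|x| - T) 0 ∂(gaussianReal 0 1)
      ≤ 4 / T ^ 2 * T ^ (2*m-1) * Real.exp (-T^2/2) := by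
  set h : ℝ → ℝ := fun x => |x| ^ (2*m-1) * max (|x| - T) 0 with hh
  have hmh : Measurable h := hfun_measurable m T
  have hh0 : ∀ x, 0 ≤ h x := fun x =>
    mul_nonneg (pow_nonneg (abs_nonneg _) _) (le_max_right _ _)
  set C : ℝ := T ^ (2*m-1) * Real.exp (-T^2/2) with hC
  have hC0 : 0 ≤ C := by positivity
  set d : ℝ → NNReal := fun x => (gaussianPDFReal 0 1 x).toNNReal with hd
  have hdm : Measurable d := (measurable_gaussianPDFReal 0 1).real_toNNReal
  have hγ : gaussianReal 0 1 = volume.withDensity (fun x => (d x : ENNReal)) := by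
    rw [gaussianReal_of_var_ne_zero 0 one_ne_zero]
    rfl
  have hsmul : ∀ x, (d x : ℝ) • h x = gaussianPDFReal 0 1 x * h x := by
    intro x
    rw [smul_eq_mul, hd]
    simp [Real.coe_toNNReal _ (gaussianPDFReal_nonneg 0 1 x)]
  have hbound : ∀ x, gaussianPDFReal 0 1 x * h x ≤ (Real.sqrt (2*π))⁻¹ * C * psif T x := by
    intro x
    rw [pdf_eq]
    have := key_pointwise m hm hT hT2 x
    calc (Real.sqrt (2*π))⁻¹ * Real.exp (-x^2/2) * h x
        = (Real.sqrt (2*π))⁻¹ * (h x * Real.exp (-x^2/2)) := by ring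
      _ ≤ (Real.sqrt (2*π))⁻¹ * (C * psif T x) := by
          apply mul_le_mul_of_nonneg_left _ (by positivity)
          simpa [hC, hh, mul_assoc] using this
      _ = (Real.sqrt (2*π))⁻¹ * C * psif T x := by ring
  have hmaj : Integrable (fun x => (Real.sqrt (2*π))⁻¹ * C * psif T x) volume :=
    (psif_integrable hT).const_mul _
  have hint : Integrable (fun x => gaussianPDFReal 0 1 x * h x) volume := by
    apply hmaj.mono (((measurable_gaussianPDFReal 0 1).mul hmh).aestronglyMeasurable)
    refine ae_of_all _ fun x => ?_
    rw [Real.norm_eq_abs, Real.norm_eq_abs, Pi.mul_apply,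
      abs_of_nonneg (mul_nonneg (gaussianPDFReal_nonneg 0 1 x) (hh0 x)),
      abs_of_nonneg (mul_nonneg (mul_nonneg (by positivity) hC0) (psif_nonneg T x))]
    exact hbound x
  constructor
  · rw [hγ]
    refine (integrable_withDensity_iff_integrable_smul hdm (g := h)).mpr ?_
    exact hint.congr (ae_of_all _ fun x => (hsmul x).symm)
  · rw [hγ, integral_withDensity_eq_integral_smul hdm]
    have e1 : ∫ x, d x • h x = ∫ x, gaussianPDFReal 0 1 x * h x :=
      integral_congr_ae (ae_of_all _ hsmul)
    rw [e1]
    have step : ∫ x, gaussianPDFReal 0 1 x * h x ≤ (Real.sqrt (2*π))⁻¹ * C * (8 / T^2) := by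
      have := integral_mono_of_nonneg
        (ae_of_all _ fun x => mul_nonneg (gaussianPDFReal_nonneg 0 1 x) (hh0 x))
        hmaj (ae_of_all _ hbound)
      calc ∫ x, gaussianPDFReal 0 1 x * h x
          ≤ ∫ x, (Real.sqrt (2*π))⁻¹ * C * psif T x := this
        _ = (Real.sqrt (2*π))⁻¹ * C * ∫ x, psif T x := integral_const_mul _ _
        _ = (Real.sqrt (2*π))⁻¹ * C * (8 / T^2) := by rw [psif_integral hT]
    refine step.trans ?_
    have hsq : (2:ℝ) ≤ Real.sqrt (2*π) := by
      have h4 : (4:ℝ) ≤ 2*π := by nlinarith [Real.pi_gt_three]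
      calc (2:ℝ) = Real.sqrt 4 := by
            rw [show (4:ℝ) = 2^2 by norm_num, Real.sqrt_sq (by norm_num : (0:ℝ) ≤ 2)]
        _ ≤ Real.sqrt (2*π) := Real.sqrt_le_sqrt h4
    have hsqpos : 0 < Real.sqrt (2*π) := lt_of_lt_of_le (by norm_num) hsq
    have hinv : (Real.sqrt (2*π))⁻¹ ≤ 2⁻¹ := by
      apply inv_anti₀ (by norm_num) hsq
    calc (Real.sqrt (2*π))⁻¹ * C * (8 / T^2)
        = (Real.sqrt (2*π))⁻¹ * (8 / T^2 * C) := by ring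
      _ ≤ 2⁻¹ * (8 / T^2 * C) := by
          apply mul_le_mul_of_nonneg_right hinv
          positivity
      _ = 4 / T ^ 2 * C := by ring
      _ = 4 / T ^ 2 * T ^ (2*m-1) * Real.exp (-T^2/2) := by rw [hC]; ring

lemma pow_le_aux (m : ℕ) (hm : 1 ≤ m) {T a : ℝ} (hT : 0 ≤ T) (ha : 0 ≤ a) :
    a ^ (2*m) ≤ T ^ (2*m) + (2*m : ℝ) * (a ^ (2*m-1) * max (a - T) 0) := by
  rcases le_or_gt a T with h | h
  · have h1 : a ^ (2*m) ≤ T ^ (2*m) := pow_le_pow_left₀ ha h _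
    have h2 : 0 ≤ (2*m : ℝ) * (a ^ (2*m-1) * max (a - T) 0) := by positivity
    linarith
  · rw [max_eq_left (by linarith : 0 ≤ a - T)]
    have key : a ^ (2*m) - T ^ (2*m) ≤ (2*m : ℝ) * a ^ (2*m-1) * (a - T) := by
      have hgeom := geom_sum₂_mul a T (2*m)
      have hsum : (∑ i ∈ Finset.range (2*m), a ^ i * T ^ (2*m - 1 - i))
          ≤ (2*m : ℝ) * a ^ (2*m-1) := by
        have hb : ∀ i ∈ Finset.range (2*m), a ^ i * T ^ (2*m - 1 - i) ≤ a ^ (2*m-1) := by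
          intro i hi
          rw [Finset.mem_range] at hi
          have h1 : T ^ (2*m - 1 - i) ≤ a ^ (2*m - 1 - i) := pow_le_pow_left₀ hT h.le _
          have h2 : a ^ i * T ^ (2*m - 1 - i) ≤ a ^ i * a ^ (2*m - 1 - i) :=
            mul_le_mul_of_nonneg_left h1 (pow_nonneg ha _)
          rw [← pow_add] at h2
          have : i + (2*m - 1 - i) = 2*m - 1 := by omega
          rwa [this] at h2
        calc (∑ i ∈ Finset.range (2*m), a ^ i * T ^ (2*m - 1 - i))
            ≤ ∑ _i ∈ Finset.range (2*m), a ^ (2*m-1) := Finset.sum_le_sum hb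
          _ = (2*m : ℝ) * a ^ (2*m-1) := by
              rw [Finset.sum_const, Finset.card_range, nsmul_eq_mul]
              push_cast
              ring
      calc a ^ (2*m) - T ^ (2*m)
          = (∑ i ∈ Finset.range (2*m), a ^ i * T ^ (2*m - 1 - i)) * (a - T) := hgeom.symm
        _ ≤ (2*m : ℝ) * a ^ (2*m-1) * (a - T) := by
            apply mul_le_mul_of_nonneg_right hsum (by linarith)
    linarith [key]

lemma final_arith (m : ℕ) (hm : 1 ≤ m) (T : ℝ) (hT12 : 12 ≤ T) (nR : ℝ) (hn : 0 < nR)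
    (hTlog : T^2 = 2*Real.log nR - 2) :
    T^(2*m) + (2*m:ℝ) * (nR * (4 / T^2 * T^(2*m-1) * Real.exp (-T^2/2)))
      ≤ (2*Real.log nR)^m := by
  have hT0 : (0:ℝ) < T := by linarith
  have hE : Real.exp (-T^2/2) = Real.exp 1 / nR := by
    have : -T^2/2 = 1 - Real.log nR := by rw [hTlog]; ring
    rw [this, Real.exp_sub, Real.exp_log hn]
  have hA0 : (0:ℝ) ≤ T^(2*m-2) := by positivity
  have hpow1 : T^(2*m-1) = T^(2*m-2) * T := by
    rw [← pow_succ]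
    congr 1
    omega
  have hpow2 : T^(2*m) = T^(2*m-2) * T^2 := by
    rw [← pow_add]
    congr 1
    omega
  have hmid : (2*m:ℝ) * (nR * (4 / T^2 * T^(2*m-1) * Real.exp (-T^2/2)))
      = 8 * m * Real.exp 1 * T^(2*m-2) / T := by
    rw [hE, hpow1]
    field_simp
    ring
  have hexp1 : Real.exp 1 < 2.7182818286 := Real.exp_one_lt_d9
  have hmid2 : 8 * (m:ℝ) * Real.exp 1 * T^(2*m-2) / T ≤ 2 * m * T^(2*m-2) := by
    rw [div_le_iff₀ hT0]
    have hm0 : (0:ℝ) ≤ (m:ℝ) := Nat.cast_nonneg m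
    nlinarith [mul_nonneg hm0 hA0, Real.exp_pos 1]
  have hrhs : T^(2*m-2) * T^2 + 2 * m * T^(2*m-2) ≤ (2*Real.log nR)^m := by
    have h2L : 2*Real.log nR = T^2 + 2 := by rw [hTlog]; ring
    rw [h2L]
    have hbin : (1:ℝ) + m * (2/T^2) ≤ (1 + 2/T^2)^m := by
      apply one_add_mul_le_pow
      have : (0:ℝ) < 2/T^2 := by positivity
      linarith
    have hTm : (0:ℝ) < (T^2)^m := by positivity
    have step : (T^2)^m * (1 + m * (2/T^2)) ≤ (T^2)^m * (1 + 2/T^2)^m :=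
      mul_le_mul_of_nonneg_left hbin (le_of_lt hTm)
    have e1 : (T^2)^m * (1 + 2/T^2)^m = (T^2 + 2)^m := by
      rw [← mul_pow]
      congr 1
      field_simp
    have e2 : (T^2)^m * (1 + m * (2/T^2)) = T^(2*m-2) * T^2 + 2 * m * T^(2*m-2) := by
      rw [← pow_mul]
      rw [show (2*m) = (2*m-2) + 2 by omega, pow_add]
      field_simp
      ring
      rw [show 2 + (m * 2 - 2) - 2 = m * 2 - 2 by omega]
    rw [e1] at step
    rw [← e2]
    exact step
  calc T^(2*m) + (2*m:ℝ) * (nR * (4 / T^2 * T^(2*m-1) * Real.exp (-T^2/2)))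
      = T^(2*m-2) * T^2 + 8 * m * Real.exp 1 * T^(2*m-2) / T := by rw [hmid, hpow2]
    _ ≤ T^(2*m-2) * T^2 + 2 * m * T^(2*m-2) := by linarith [hmid2]
    _ ≤ (2*Real.log nR)^m := hrhs

end ThresholdAux

/-- For a fixed threshold index `k ≥ k*` and a fixed positive integer `m`, the `2m`-th moment
of the LARS threshold `θ̃_k = |c̃_{p_{k+1}}|` (the `(k+1)`-th largest absolute coefficient)
satisfies `E[θ̃_k^{2m}] ≤ (2 log n)^m` for all sufficiently large `n`. -/
theorem threshold_moment_bound
    {Ω : Type*} [MeasureSpace Ω] [IsProbabilityMeasure (ℙ : Measure Ω)]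
    (σ : ℝ) (hσ : 0 < σ)
    (Kstar : Finset ℕ) (hKne : Kstar.Nonempty) (hKpos : ∀ j ∈ Kstar, 1 ≤ j)
    (β : ℕ → ℝ) (hβ : ∀ j, β j ≠ 0 ↔ j ∈ Kstar)
    (c : ℕ → ℕ → Ω → ℝ) (hmeas : ∀ n j, Measurable (c n j))
    (hdist : ∀ n, Kstar.max' hKne < n → ∀ j ∈ Finset.Icc 1 n,
      Measure.map (c n j) ℙ = gaussianReal (Real.sqrt n * β j / σ) 1)
    (hindep : ∀ n, Kstar.max' hKne < n →
      iIndepFun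
        (fun j : (Finset.Icc 1 n : Finset ℕ) => c n (j : ℕ)) ℙ)
    (p : ℕ → Ω → ℕ → ℕ) (hpmeas : ∀ n l, Measurable fun ω => p n ω l)
    (hp : ∀ n, Kstar.max' hKne < n → ∀ᵐ ω ∂ℙ,
      Set.BijOn (p n ω) (Set.Icc 1 n) (Set.Icc 1 n) ∧
      ∀ l ∈ Set.Icc 1 n, ∀ r ∈ Set.Icc 1 n, l < r →
        |c n (p n ω r) ω| < |c n (p n ω l) ω|)
    (k : ℕ) (hk : Kstar.card ≤ k) (m : ℕ) (hm : 1 ≤ m) :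
    ∃ N : ℕ, ∀ n ≥ N,
      ∫ ω, (c n (p n ω (k + 1)) ω) ^ (2 * m) ∂ℙ ≤ (2 * Real.log n) ^ m := by
  classical
  refine ⟨max (Kstar.max' hKne + k + 2) (⌈Real.exp (73 + 2*(m:ℝ))⌉₊ + 1), fun n hn => ?_⟩
  have hn1 : Kstar.max' hKne < n := by
    have := le_trans (le_max_left _ _) hn; omega
  have hkn : k + 1 ≤ n := by have := le_trans (le_max_left _ _) hn; omega
  have hnceil : (⌈Real.exp (73 + 2*(m:ℝ))⌉₊ + 1 : ℕ) ≤ n := le_trans (le_max_right _ _) hn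
  have hn0 : 0 < n := by omega
  have hnR : (0:ℝ) < n := by exact_mod_cast hn0
  have hlog : 73 + 2*(m:ℝ) ≤ Real.log n := by
    rw [Real.le_log_iff_exp_le hnR]
    calc Real.exp (73 + 2*(m:ℝ)) ≤ (⌈Real.exp (73 + 2*(m:ℝ))⌉₊ : ℝ) := Nat.le_ceil _
      _ ≤ n := by exact_mod_cast Nat.le_of_succ_le hnceil
  have hm1 : (1:ℝ) ≤ m := by exact_mod_cast hm
  have hL146 : 146 + 4*(m:ℝ) ≤ 2 * Real.log n := by linarith
  set T : ℝ := Real.sqrt (2 * Real.log n - 2) with hT_def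
  have hL2 : (0:ℝ) ≤ 2 * Real.log n - 2 := by linarith
  have hT2 : T^2 = 2 * Real.log n - 2 := Real.sq_sqrt hL2
  have hT12 : 12 ≤ T := by
    rw [hT_def]
    have h12 : (12:ℝ) = Real.sqrt 144 := by
      rw [show (144:ℝ) = 12^2 by norm_num, Real.sqrt_sq (by norm_num : (0:ℝ) ≤ 12)]
    rw [h12]
    apply Real.sqrt_le_sqrt
    linarith
  have hT0 : (0:ℝ) < T := by linarith
  have hT4m : 4*(m:ℝ) ≤ T^2 := by rw [hT2]; linarith
  set S : Finset ℕ := (Finset.Icc 1 n).filter (fun j => j ∉ Kstar) with hS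
  set h : ℝ → ℝ := fun x => |x| ^ (2*m-1) * max (|x| - T) 0 with hh
  have hmh : Measurable h := hfun_measurable m T
  have hh0 : ∀ x, 0 ≤ h x := fun x =>
    mul_nonneg (pow_nonneg (abs_nonneg _) _) (le_max_right _ _)
  have hmapS : ∀ j ∈ S, Measure.map (c n j) ℙ = gaussianReal 0 1 := by
    intro j hj
    rw [hS, Finset.mem_filter] at hj
    have hβ0 : β j = 0 := by
      by_contra hne
      exact hj.2 ((hβ j).mp hne)
    have hd := hdist n hn1 j hj.1
    rwa [hβ0, mul_zero, zero_div] at hd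
  have hGT := gauss_tail m hm hT0 hT4m
  have hintj : ∀ j ∈ S, Integrable (fun ω => h (c n j ω)) ℙ := by
    intro j hj
    have h1 := hGT.1
    rw [← hmapS j hj] at h1
    exact (integrable_map_measure hmh.aestronglyMeasurable (hmeas n j).aemeasurable).mp h1
  set B : ℝ := 4 / T ^ 2 * T ^ (2*m-1) * Real.exp (-T^2/2) with hB
  have hB0 : 0 ≤ B := by positivity
  have hintegralj : ∀ j ∈ S, ∫ ω, h (c n j ω) ∂ℙ ≤ B := by
    intro j hj
    have e1 : ∫ x, h x ∂(gaussianReal 0 1) = ∫ ω, h (c n j ω) ∂ℙ := by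
      rw [← hmapS j hj, integral_map (hmeas n j).aemeasurable hmh.aestronglyMeasurable]
    rw [← e1]
    exact hGT.2
  set g : Ω → ℝ := fun ω => T^(2*m) + (2*m:ℝ) * ∑ j ∈ S, h (c n j ω) with hg
  have hInt_sum : Integrable (fun ω => ∑ j ∈ S, h (c n j ω)) ℙ :=
    integrable_finset_sum S hintj
  have hInt_g : Integrable g ℙ := (integrable_const _).add (hInt_sum.const_mul _)
  -- a.s. bound
  have h_ae : ∀ᵐ ω ∂ℙ, (c n (p n ω (k + 1)) ω) ^ (2 * m) ≤ g ω := by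
    filter_upwards [hp n hn1] with ω hω
    obtain ⟨hbij, hord⟩ := hω
    have hpig : ∃ l ∈ Finset.Icc 1 (k+1), p n ω l ∉ Kstar := by
      by_contra hcon
      push_neg at hcon
      have himg : (Finset.Icc 1 (k+1)).image (p n ω) ⊆ Kstar := by
        intro j hj
        obtain ⟨l, hl, rfl⟩ := Finset.mem_image.mp hj
        exact hcon l hl
      have hinj : Set.InjOn (p n ω) ↑(Finset.Icc 1 (k+1)) := by
        apply hbij.injOn.mono
        intro l hl
        rw [Finset.coe_Icc] at hl
        exact ⟨hl.1, le_trans hl.2 hkn⟩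
      have hcard := Finset.card_image_of_injOn hinj
      have hle := Finset.card_le_card himg
      rw [hcard, Nat.card_Icc] at hle
      omega
    obtain ⟨l, hl, hlK⟩ := hpig
    rw [Finset.mem_Icc] at hl
    have hlset : l ∈ Set.Icc 1 n := ⟨hl.1, le_trans hl.2 hkn⟩
    have hk1set : (k+1) ∈ Set.Icc 1 n := ⟨by omega, hkn⟩
    have hjS : p n ω l ∈ S := by
      rw [hS, Finset.mem_filter]
      refine ⟨?_, hlK⟩
      have hmem := hbij.mapsTo hlset
      rw [Finset.mem_Icc]
      exact ⟨hmem.1, hmem.2⟩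
    have habs : |c n (p n ω (k+1)) ω| ≤ |c n (p n ω l) ω| := by
      rcases eq_or_lt_of_le hl.2 with heq | hlt
      · rw [heq]
      · exact (hord l hlset (k+1) hk1set hlt).le
    have heven : ∀ a : ℝ, a ^ (2*m) = |a| ^ (2*m) := by
      intro a
      rw [pow_mul, pow_mul, sq_abs]
    calc (c n (p n ω (k + 1)) ω) ^ (2 * m)
        = |c n (p n ω (k + 1)) ω| ^ (2*m) := heven _
      _ ≤ |c n (p n ω l) ω| ^ (2*m) := pow_le_pow_left₀ (abs_nonneg _) habs _
      _ ≤ T ^ (2*m) + (2*m : ℝ) * (|c n (p n ω l) ω| ^ (2*m-1)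
            * max (|c n (p n ω l) ω| - T) 0) :=
          pow_le_aux m hm hT0.le (abs_nonneg _)
      _ ≤ g ω := by
          rw [hg]
          have hsingle : h (c n (p n ω l) ω) ≤ ∑ j ∈ S, h (c n j ω) :=
            Finset.single_le_sum (f := fun j => h (c n j ω)) (fun j _ => hh0 _) hjS
          have : (2*m : ℝ) * h (c n (p n ω l) ω) ≤ (2*m : ℝ) * ∑ j ∈ S, h (c n j ω) := by
            apply mul_le_mul_of_nonneg_left hsingle (by positivity)
          simp only [hh] at this ⊢
          linarith
  have hf0 : ∀ᵐ ω ∂ℙ, 0 ≤ (c n (p n ω (k + 1)) ω) ^ (2 * m) := by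
    refine Filter.Eventually.of_forall fun ω => ?_
    exact Even.pow_nonneg (even_two_mul m) _
  have step1 : ∫ ω, (c n (p n ω (k + 1)) ω) ^ (2 * m) ∂ℙ ≤ ∫ ω, g ω ∂ℙ :=
    integral_mono_of_nonneg hf0 hInt_g h_ae
  have hcardS : (S.card : ℝ) ≤ n := by
    have h1 : S.card ≤ (Finset.Icc 1 n).card := Finset.card_filter_le _ _
    have h2 : (Finset.Icc 1 n).card = n := by rw [Nat.card_Icc]; omega
    exact_mod_cast le_trans h1 (le_of_eq h2)
  have step2 : ∫ ω, g ω ∂ℙ ≤ T^(2*m) + (2*m:ℝ) * ((n:ℝ) * B) := by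
    rw [hg]
    have e1 : ∫ ω, (T^(2*m) + (2*m:ℝ) * ∑ j ∈ S, h (c n j ω)) ∂ℙ
        = T^(2*m) + (2*m:ℝ) * ∫ ω, ∑ j ∈ S, h (c n j ω) ∂ℙ := by
      rw [integral_add (integrable_const _) (hInt_sum.const_mul _), integral_const,
        integral_const_mul]
      simp
    rw [e1]
    have e2 : ∫ ω, ∑ j ∈ S, h (c n j ω) ∂ℙ = ∑ j ∈ S, ∫ ω, h (c n j ω) ∂ℙ :=
      integral_finset_sum S hintj
    have e3 : ∑ j ∈ S, ∫ ω, h (c n j ω) ∂ℙ ≤ (n:ℝ) * B := by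
      calc ∑ j ∈ S, ∫ ω, h (c n j ω) ∂ℙ ≤ ∑ _j ∈ S, B := Finset.sum_le_sum hintegralj
        _ = (S.card : ℝ) * B := by rw [Finset.sum_const, nsmul_eq_mul]
        _ ≤ (n:ℝ) * B := mul_le_mul_of_nonneg_right hcardS hB0
    have : (2*m:ℝ) * ∫ ω, ∑ j ∈ S, h (c n j ω) ∂ℙ ≤ (2*m:ℝ) * ((n:ℝ) * B) := by
      rw [e2]
      apply mul_le_mul_of_nonneg_left e3 (by positivity)
    linarith
  have step3 : T^(2*m) + (2*m:ℝ) * ((n:ℝ) * B) ≤ (2*Real.log n)^m := by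
    rw [hB]
    exact final_arith m hm T hT12 n hnR hT2
  linarith
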